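/- Let g : {0,1}ⁿ → ℝ be nonnegative with 𝔼g = 1 (expectation under the uniform measure), with even part g₀ and odd part g₁. Define Ent(g) = 𝔼[g·log₂ g] (with 0·log₂ 0 = 0). Then Ent(g) = Ent(g₀) + 𝔼_x [ g₀(x)·(1 − H((1 − |g₁(x)|/g₀(x))/2)) ], where H is the binary entropy function and the summand is interpreted as 0 at points where g₀(x) = g₁(x) = 0. -/

import Mathlib

open Finset

noncomputable def expec (n : ℕ) (f : (Fin n → Bool) → ℝ) : ℝ :=
  (∑ x : Fin n → Bool, f x) / 2 ^ n

noncomputable def walsh (n : ℕ) (S : Finset (Fin n)) (x : Fin n → Bool) : ℝ :=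
  ∏ i ∈ S, (if x i then (-1 : ℝ) else 1)

noncomputable def fcoef (n : ℕ) (f : (Fin n → Bool) → ℝ) (S : Finset (Fin n)) : ℝ :=
  expec n (fun x => f x * walsh n S x)

def comp (n : ℕ) (x : Fin n → Bool) : Fin n → Bool := fun i => !(x i)

noncomputable def evenPart (n : ℕ) (f : (Fin n → Bool) → ℝ) (x : Fin n → Bool) : ℝ :=
  (f x + f (comp n x)) / 2

noncomputable def oddPart (n : ℕ) (f : (Fin n → Bool) → ℝ) (x : Fin n → Bool) : ℝ :=
  f x - evenPart n f x

noncomputable def noiseK (n : ℕ) (ε : ℝ) (x y : Fin n → Bool) : ℝ :=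
  ∏ i : Fin n, (if x i = y i then 1 - ε else ε)

noncomputable def noiseOp (n : ℕ) (ε : ℝ) (f : (Fin n → Bool) → ℝ) (x : Fin n → Bool) : ℝ :=
  ∑ y : Fin n → Bool, noiseK n ε x y * f y

noncomputable def entro (n : ℕ) (g : (Fin n → Bool) → ℝ) : ℝ :=
  expec n (fun x => g x * Real.logb 2 (g x)) - expec n g * Real.logb 2 (expec n g)

noncomputable def varia (n : ℕ) (g : (Fin n → Bool) → ℝ) : ℝ :=
  expec n (fun x => g x ^ 2) - (expec n g) ^ 2

noncomputable def binEnt (x : ℝ) : ℝ := -x * Real.logb 2 x - (1 - x) * Real.logb 2 (1 - x)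

lemma mul_logb_div (x t : ℝ) (hx : 0 ≤ x) (ht : 0 < t) :
    x * Real.logb 2 (x / t) = x * Real.logb 2 x - x * Real.logb 2 t := by
  rcases eq_or_lt_of_le hx with h | h
  · simp [← h]
  · rw [Real.logb_div (ne_of_gt h) (ne_of_gt ht)]; ring

lemma key_le (a b : ℝ) (ha : 0 ≤ a) (hab : a ≤ b) (hs : 0 < a + b) :
    (a * Real.logb 2 a + b * Real.logb 2 b) / 2
      = ((a+b)/2) * Real.logb 2 ((a+b)/2)
        + ((a+b)/2) * (1 - binEnt ((1 - (|a - b| / 2) / ((a+b)/2)) / 2)) := by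
  have h1 : |a - b| = b - a := by rw [abs_sub_comm]; exact abs_of_nonneg (by linarith)
  have hs' : (a+b) ≠ 0 := ne_of_gt hs
  have hp : (1 - (|a - b| / 2) / ((a+b)/2)) / 2 = a / (a+b) := by
    rw [h1]; field_simp; ring
  rw [hp]
  have h1p : 1 - a/(a+b) = b/(a+b) := by field_simp; ring
  unfold binEnt
  rw [h1p]
  have e1 : Real.logb 2 ((a+b)/2) = Real.logb 2 (a+b) - 1 := by
    rw [Real.logb_div hs' (by norm_num)]
    simp
  have e2 : a * Real.logb 2 (a/(a+b)) = a * Real.logb 2 a - a * Real.logb 2 (a+b) :=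
    mul_logb_div a (a+b) ha hs
  have e3 : b * Real.logb 2 (b/(a+b)) = b * Real.logb 2 b - b * Real.logb 2 (a+b) :=
    mul_logb_div b (a+b) (le_trans ha hab) hs
  have hsa : a/(a+b)*(a+b) = a := div_mul_cancel₀ a hs'
  have hsb : b/(a+b)*(a+b) = b := div_mul_cancel₀ b hs'
  rw [e1]
  linear_combination (-(1:ℝ)/2)*e2 + (-(1:ℝ)/2)*e3 + (-(1:ℝ)/2) * Real.logb 2 (a/(a+b)) * hsa + (-(1:ℝ)/2) * Real.logb 2 (b/(a+b)) * hsb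

lemma key (a b : ℝ) (ha : 0 ≤ a) (hb : 0 ≤ b) :
    (a * Real.logb 2 a + b * Real.logb 2 b) / 2
      = ((a+b)/2) * Real.logb 2 ((a+b)/2)
        + ((a+b)/2) * (1 - binEnt ((1 - |a - (a+b)/2| / ((a+b)/2)) / 2)) := by
  have habs : |a - (a+b)/2| = |a - b| / 2 := by
    have : a - (a+b)/2 = (a-b)/2 := by ring
    rw [this, abs_div]
    norm_num
  rw [habs]
  rcases eq_or_lt_of_le (by linarith : (0:ℝ) ≤ a + b) with h | h
  · have ha0 : a = 0 := by linarith [abs_nonneg (a-b)]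
    have hb0 : b = 0 := by linarith
    simp [ha0, hb0]
  · rcases le_total a b with hab | hab
    · exact key_le a b ha hab h
    · have := key_le b a hb hab (by linarith)
      rw [abs_sub_comm] at this
      rw [show b + a = a + b from by ring] at this
      linarith

theorem stmt_7 (n : ℕ) (g : (Fin n → Bool) → ℝ) (hg : ∀ x, 0 ≤ g x) (hE : expec n g = 1) :
    entro n g = entro n (evenPart n g)
      + expec n (fun x => evenPart n g x *
          (1 - binEnt ((1 - |oddPart n g x| / evenPart n g x) / 2))) := by
  have hinv : Function.Involutive (comp n) := by
    intro x; funext i; simp [comp]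
  have hre : ∀ F : (Fin n → Bool) → ℝ, ∑ x : Fin n → Bool, F (comp n x) = ∑ x : Fin n → Bool, F x := by
    intro F
    exact Equiv.sum_comp hinv.toPerm F
  have hEe : expec n (evenPart n g) = 1 := by
    unfold expec evenPart at *
    rw [← hE]
    congr 1
    rw [show (∑ x : Fin n → Bool, (g x + g (comp n x)) / 2)
        = ((∑ x : Fin n → Bool, g x) + ∑ x : Fin n → Bool, g (comp n x)) / 2 from by
      rw [← Finset.sum_add_distrib, ← Finset.sum_div]]
    rw [hre g]
    ring
  have hsum : ∑ x : Fin n → Bool, g x * Real.logb 2 (g x)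
      = (∑ x : Fin n → Bool, evenPart n g x * Real.logb 2 (evenPart n g x))
        + ∑ x : Fin n → Bool, evenPart n g x *
            (1 - binEnt ((1 - |oddPart n g x| / evenPart n g x) / 2)) := by
    have step1 : ∑ x : Fin n → Bool, g x * Real.logb 2 (g x)
        = ∑ x : Fin n → Bool,
            (g x * Real.logb 2 (g x) + g (comp n x) * Real.logb 2 (g (comp n x))) / 2 := by
      rw [show (∑ x : Fin n → Bool,
            (g x * Real.logb 2 (g x) + g (comp n x) * Real.logb 2 (g (comp n x))) / 2)
          = ((∑ x : Fin n → Bool, g x * Real.logb 2 (g x))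
            + ∑ x : Fin n → Bool, g (comp n x) * Real.logb 2 (g (comp n x))) / 2 from by
        rw [← Finset.sum_add_distrib, ← Finset.sum_div]]
      rw [hre (fun x => g x * Real.logb 2 (g x))]
      ring
    rw [step1, ← Finset.sum_add_distrib]
    apply Finset.sum_congr rfl
    intro x _
    have := key (g x) (g (comp n x)) (hg x) (hg (comp n x))
    unfold evenPart oddPart evenPart
    convert this using 4
  unfold entro
  rw [hE, hEe]
  unfold expec
  simp only [Real.logb_one, mul_zero, sub_zero, one_mul]
  rw [hsum]
  ring
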